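/- Let W ∈ C¹(ℝᵐ;ℝ) with m ≥ 1 (W possibly sign-changing), let n ≥ 2, and let v(x) = u(|x|) be a radially symmetric C² solution of Δv = ∇W(v) in ℝⁿ, where u ∈ C²([0,∞);ℝᵐ) satisfies u'' + ((n−1)/r)u' = ∇W(u) on (0,∞) with u'(0) = 0. Then the function R ↦ (1/Rⁿ) ∫_{B(0,R)} { ((n−2)/2)|∇v|² + n W(v) } dx is nondecreasing on (0,∞); that is, its derivative with respect to R is nonnegative for every R > 0. -/

import Mathlib

open MeasureTheory Filter Metric Set

open scoped RealInnerProductSpace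

/-- **Strong energy monotonicity for radial solutions.** Let `W ∈ C¹(ℝᵐ;ℝ)`
(possibly sign-changing), `n ≥ 2`, and let `v(x) = u(|x|)` be a radially
symmetric solution of `Δv = ∇W(v)` in `ℝⁿ`, where `u ∈ C²([0,∞);ℝᵐ)` satisfies
`u'' + ((n−1)/r)u' = ∇W(u)` on `(0,∞)` with `u'(0) = 0`. Then
`R ↦ (1/Rⁿ) ∫_{B(0,R)} { ((n−2)/2)|∇v|² + n W(v) } dx` is nondecreasing on
`(0,∞)` (here `|∇v(x)|² = |u'(|x|)|²`). -/
theorem radial_energy_monotonicity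
    {m n : ℕ} (hm : 1 ≤ m) (hn : 2 ≤ n)
    (W : EuclideanSpace ℝ (Fin m) → ℝ) (hW : ContDiff ℝ 1 W)
    (u u' u'' : ℝ → EuclideanSpace ℝ (Fin m))
    (hu' : ∀ r ∈ Set.Ici (0 : ℝ), HasDerivWithinAt u (u' r) (Set.Ici 0) r)
    (hu'' : ∀ r ∈ Set.Ici (0 : ℝ), HasDerivWithinAt u' (u'' r) (Set.Ici 0) r)
    (hu''cont : ContinuousOn u'' (Set.Ici 0))
    (hODE : ∀ r : ℝ, 0 < r →
      u'' r + (((n : ℝ) - 1) / r) • u' r = gradient W (u r))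
    (hinit : u' 0 = 0)
    (v : EuclideanSpace ℝ (Fin n) → EuclideanSpace ℝ (Fin m))
    (hv : ∀ x, v x = u ‖x‖) :
    MonotoneOn (fun R : ℝ =>
      (1 / R ^ n) * ∫ x in Metric.ball (0 : EuclideanSpace ℝ (Fin n)) R,
        (((n : ℝ) - 2) / 2 * ‖u' ‖x‖‖ ^ 2 + (n : ℝ) * W (u ‖x‖)))
      (Set.Ioi 0) := by
  classical
  have hn0 : 0 < n := by omega
  have hnne : n ≠ 0 := by omega
  have hn1 : (1 : ℝ) ≤ (n : ℝ) := by exact_mod_cast Nat.one_le_of_lt hn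
  haveI : Nontrivial (EuclideanSpace ℝ (Fin n)) := by
    refine ⟨EuclideanSpace.single (⟨0, hn0⟩ : Fin n) (1 : ℝ), 0, fun h => ?_⟩
    have := congrArg (fun f : EuclideanSpace ℝ (Fin n) => f ⟨0, hn0⟩) h
    simp [EuclideanSpace.single_apply] at this
  set g : ℝ → ℝ := fun r => ((n : ℝ) - 2) / 2 * ‖u' r‖ ^ 2 + (n : ℝ) * W (u r) with hgdef
  have hWd : Differentiable ℝ W := hW.differentiable one_ne_zero
  have hucont : ContinuousOn u (Ici 0) := fun r hr => (hu' r hr).continuousWithinAt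
  have hu'cont : ContinuousOn u' (Ici 0) := fun r hr => (hu'' r hr).continuousWithinAt
  have hgcont : ContinuousOn g (Ici 0) :=
    (continuousOn_const.mul ((hu'cont.norm).pow 2)).add
      (continuousOn_const.mul (hW.continuous.comp_continuousOn hucont))
  have hu_at : ∀ r : ℝ, 0 < r → HasDerivAt u (u' r) r := fun r hr =>
    (hu' r hr.le).hasDerivAt (Ici_mem_nhds hr)
  have hu'_at : ∀ r : ℝ, 0 < r → HasDerivAt u' (u'' r) r := fun r hr =>
    (hu'' r hr.le).hasDerivAt (Ici_mem_nhds hr)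
  have hW_at : ∀ r : ℝ, 0 < r →
      HasDerivAt (fun s => W (u s)) ⟪gradient W (u r), u' r⟫ r := by
    intro r hr
    have h := ((hWd (u r)).hasGradientAt.hasFDerivAt).comp_hasDerivAt r (hu_at r hr)
    rw [InnerProductSpace.toDual_apply_apply] at h
    exact h
  have hnorm_at : ∀ r : ℝ, 0 < r →
      HasDerivAt (fun s => ‖u' s‖ ^ 2) (2 * ⟪u'' r, u' r⟫) r := by
    intro r hr
    have h := (hu'_at r hr).inner ℝ (hu'_at r hr)
    have heq : (fun s => ⟪u' s, u' s⟫) = fun s => ‖u' s‖ ^ 2 := by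
      funext s; rw [real_inner_self_eq_norm_sq]
    rw [heq] at h
    convert h using 1
    rfl
    rfl
    rw [real_inner_comm (u' r) (u'' r)]; ring
  have hODEinner : ∀ r : ℝ, 0 < r →
      ⟪gradient W (u r), u' r⟫ = ⟪u'' r, u' r⟫ + ((n : ℝ) - 1) / r * ‖u' r‖ ^ 2 := by
    intro r hr
    rw [← hODE r hr, inner_add_left, real_inner_smul_left, real_inner_self_eq_norm_sq]
  set vb : ℝ := (volume (ball (0 : EuclideanSpace ℝ (Fin n)) 1)).toReal with hvb
  have hvb0 : 0 ≤ vb := ENNReal.toReal_nonneg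
  set Φ : ℝ → ℝ := fun R => (n : ℝ) * vb * (W (u R) - ‖u' R‖ ^ 2 / 2) with hΦdef
  have hΦderiv : ∀ r : ℝ, 0 < r →
      HasDerivAt Φ ((n : ℝ) * vb * (((n : ℝ) - 1) / r * ‖u' r‖ ^ 2)) r := by
    intro r hr
    have h := ((hW_at r hr).sub ((hnorm_at r hr).div_const 2)).const_mul ((n : ℝ) * vb)
    convert h using 1
    rfl
    rfl
    rfl
    rw [hODEinner r hr]; ring
  have hΦmono : MonotoneOn Φ (Ioi (0 : ℝ)) := by
    refine monotoneOn_of_deriv_nonneg (convex_Ioi 0)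
      (fun r hr => (hΦderiv r hr).continuousAt.continuousWithinAt) ?_ ?_
    · intro r hr
      rw [interior_Ioi] at hr
      exact (hΦderiv r hr).differentiableAt.differentiableWithinAt
    · intro r hr
      rw [interior_Ioi] at hr
      rw [(hΦderiv r hr).deriv]
      have h1 : (0 : ℝ) ≤ (n : ℝ) - 1 := by linarith
      have h2 : (0 : ℝ) ≤ ((n : ℝ) - 1) / r := div_nonneg h1 (le_of_lt hr)
      exact mul_nonneg (mul_nonneg (by positivity) hvb0)
        (mul_nonneg h2 (sq_nonneg _))
  -- the auxiliary function and its derivative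
  set ψ : ℝ → ℝ := fun s => s ^ n * g s - ((n : ℝ) - 1) * (s ^ n * ‖u' s‖ ^ 2) with hψdef
  have hψderiv : ∀ s : ℝ, 0 < s → HasDerivAt ψ ((n : ℝ) * (s ^ (n - 1) * g s)) s := by
    intro s hs
    have hs' : s ≠ 0 := ne_of_gt hs
    have hpow : HasDerivAt (fun t : ℝ => t ^ n) ((n : ℝ) * s ^ (n - 1)) s := by
      simpa using hasDerivAt_pow n s
    have hg_at : HasDerivAt g
        (((n : ℝ) - 2) / 2 * (2 * ⟪u'' s, u' s⟫) + (n : ℝ) * ⟪gradient W (u s), u' s⟫) s :=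
      ((hnorm_at s hs).const_mul _).add ((hW_at s hs).const_mul _)
    have h := (hpow.mul hg_at).sub ((hpow.mul (hnorm_at s hs)).const_mul ((n : ℝ) - 1))
    convert h using 1
    rfl
    rfl
    rfl
    rw [hODEinner s hs]
    have hsn : s ^ n = s ^ (n - 1) * s := by
      rw [← pow_succ]; congr 1; omega
    rw [hsn]
    field_simp
    ring
  have hFTC : ∀ R : ℝ, 0 < R →
      (n : ℝ) * ∫ r in (0 : ℝ)..R, r ^ (n - 1) * g r = ψ R := by
    intro R hR
    have hcont : ContinuousOn ψ (Icc 0 R) := by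
      refine ContinuousOn.sub ?_ ?_
      · exact ((continuousOn_pow n).mono (Icc_subset_Ici_self)).mul
          (hgcont.mono Icc_subset_Ici_self)
      · exact continuousOn_const.mul
          (((continuousOn_pow n).mono Icc_subset_Ici_self).mul
            (((hu'cont.mono Icc_subset_Ici_self).norm).pow 2))
    have hint : IntervalIntegrable (fun r => (n : ℝ) * (r ^ (n - 1) * g r)) volume 0 R := by
      apply ContinuousOn.intervalIntegrable
      rw [uIcc_of_le hR.le]
      exact continuousOn_const.mul
        (((continuousOn_pow _).mono Icc_subset_Ici_self).mul (hgcont.mono Icc_subset_Ici_self))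
    have hsub := intervalIntegral.integral_eq_sub_of_hasDeriv_right_of_le hR.le hcont
      (fun x hx => ((hψderiv x hx.1).hasDerivWithinAt)) hint
    have hψ0 : ψ 0 = 0 := by simp [hψdef, zero_pow hnne]
    rw [hψ0, sub_zero] at hsub
    rw [← hsub, intervalIntegral.integral_const_mul]
  -- polar coordinates
  have hpolar : ∀ R : ℝ, 0 < R →
      (∫ x in ball (0 : EuclideanSpace ℝ (Fin n)) R, g ‖x‖)
        = (n : ℝ) * (vb * ∫ r in (0 : ℝ)..R, r ^ (n - 1) * g r) := by
    intro R hR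
    rw [← integral_indicator measurableSet_ball]
    have h1 : ∀ x : EuclideanSpace ℝ (Fin n),
        (ball (0 : EuclideanSpace ℝ (Fin n)) R).indicator (fun x => g ‖x‖) x
          = (Iio R).indicator g ‖x‖ := by
      intro x
      by_cases hx : ‖x‖ < R
      · simp [indicator, mem_ball_zero_iff, hx]
      · simp [indicator, mem_ball_zero_iff, hx]
    simp_rw [h1]
    rw [integral_fun_norm_addHaar volume ((Iio R).indicator g)]
    have h2 : ∀ y : ℝ, y ^ (Module.finrank ℝ (EuclideanSpace ℝ (Fin n)) - 1)
          • (Iio R).indicator g y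
        = (Iio R).indicator (fun y => y ^ (n - 1) * g y) y := by
      intro y
      by_cases hy : y < R
      · simp [indicator, hy, finrank_euclideanSpace_fin]
      · simp [indicator, hy]
    simp_rw [h2]
    rw [integral_indicator measurableSet_Iio, Measure.restrict_restrict measurableSet_Iio,
      Iio_inter_Ioi, ← integral_Ioc_eq_integral_Ioo, ← intervalIntegral.integral_of_le hR.le,
      finrank_euclideanSpace_fin]
    rw [nsmul_eq_mul, smul_eq_mul]
    rfl
  -- final identification on Ioi 0
  have hEeq : ∀ R : ℝ, 0 < R →
      (1 / R ^ n) * (∫ x in ball (0 : EuclideanSpace ℝ (Fin n)) R,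
        (((n : ℝ) - 2) / 2 * ‖u' ‖x‖‖ ^ 2 + (n : ℝ) * W (u ‖x‖))) = Φ R := by
    intro R hR
    have hI : (∫ x in ball (0 : EuclideanSpace ℝ (Fin n)) R,
        (((n : ℝ) - 2) / 2 * ‖u' ‖x‖‖ ^ 2 + (n : ℝ) * W (u ‖x‖)))
        = ∫ x in ball (0 : EuclideanSpace ℝ (Fin n)) R, g ‖x‖ := rfl
    rw [hI, hpolar R hR]
    have h3 : (n : ℝ) * ∫ r in (0 : ℝ)..R, r ^ (n - 1) * g r = ψ R := hFTC R hR
    have hstep : (1 / R ^ n) * ((n : ℝ) * (vb * ∫ r in (0 : ℝ)..R, r ^ (n - 1) * g r))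
        = (1 / R ^ n) * (vb * ψ R) := by
      rw [← h3]; ring
    rw [hstep]
    have hRn : R ^ n ≠ 0 := pow_ne_zero n (ne_of_gt hR)
    simp only [hψdef, hΦdef, hgdef]
    field_simp
    ring
  intro a ha b hb hab
  simp only
  rw [hEeq a ha, hEeq b hb]
  exact hΦmono ha hb hab
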